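/- Let v, vᵢ, vⱼ, v_{ij} : ℝ → ℝ be differentiable functions, all nonvanishing, with vᵢ(t) ≠ vⱼ(t) for all t. Set aⁱ := v/vᵢ, aʲ := v/vⱼ, aⁱⱼ := vⱼ/v_{ij}, aʲᵢ := vᵢ/v_{ij}. Then the first (aa)-equation aʲ·aⁱⱼ = aⁱ·aʲᵢ holds identically, and the second (aa)-equation (1 + (aʲ)')·aⁱⱼ + aʲ = (1 + (aⁱ)')·aʲᵢ + aⁱ holds identically if and only if v_{ij} = vᵢ·vⱼ/v + (vᵢ'·vⱼ − vᵢ·vⱼ')/(vⱼ − vᵢ) identically on ℝ. -/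

import Mathlib

/-- In the potential variables `aⁱ = v/vᵢ`, `aⁱⱼ = vⱼ/v_{ij}`, the first
(aa)-equation holds automatically, and the second one holds identically iff `v_{ij}`
is given by the map (TTv). -/
theorem aa_in_potential_variables
    (v vi vj vij : ℝ → ℝ)
    (hv : Differentiable ℝ v) (hvi : Differentiable ℝ vi)
    (hvj : Differentiable ℝ vj) (hvij : Differentiable ℝ vij)
    (hv0 : ∀ t, v t ≠ 0) (hvi0 : ∀ t, vi t ≠ 0)
    (hvj0 : ∀ t, vj t ≠ 0) (hvij0 : ∀ t, vij t ≠ 0)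
    (hne : ∀ t, vi t ≠ vj t)
    (ai aj aij aji : ℝ → ℝ)
    (hai : ∀ t, ai t = v t / vi t) (haj : ∀ t, aj t = v t / vj t)
    (haij : ∀ t, aij t = vj t / vij t) (haji : ∀ t, aji t = vi t / vij t) :
    (∀ t, aj t * aij t = ai t * aji t) ∧
    ((∀ t, (1 + deriv aj t) * aij t + aj t = (1 + deriv ai t) * aji t + ai t)
      ↔ (∀ t, vij t = vi t * vj t / v t
          + (deriv vi t * vj t - vi t * deriv vj t) / (vj t - vi t))) := by
  have hai' : ai = fun t => v t / vi t := funext hai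
  have haj' : aj = fun t => v t / vj t := funext haj
  subst hai' haj'
  have dai : ∀ t, deriv (fun t => v t / vi t) t
      = (deriv v t * vi t - v t * deriv vi t) / (vi t)^2 := fun t =>
    deriv_div (hv.differentiableAt) (hvi.differentiableAt) (hvi0 t)
  have daj : ∀ t, deriv (fun t => v t / vj t) t
      = (deriv v t * vj t - v t * deriv vj t) / (vj t)^2 := fun t =>
    deriv_div (hv.differentiableAt) (hvj.differentiableAt) (hvj0 t)
  constructor
  · intro t
    rw [haij, haji]
    field_simp [hvi0 t, hvj0 t]
  · constructor
    · intro h t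
      have ht := h t
      simp only [haij, haji, dai, daj] at ht
      have h1 := hv0 t; have h2 := hvi0 t; have h3 := hvj0 t; have h4 := hvij0 t
      have hsub : vj t - vi t ≠ 0 := sub_ne_zero.mpr (hne t).symm
      field_simp at ht ⊢
      have hne5 : (vi t)^2 * (vj t)^2 * vij t ≠ 0 := by positivity
      refine mul_right_cancel₀ hne5 ?_
      linear_combination (-((vi t)^2 * (vj t)^2 * vij t)) * ht
    · intro h t
      have ht := h t
      simp only [haij, haji, dai, daj]
      have h1 := hv0 t; have h2 := hvi0 t; have h3 := hvj0 t; have h4 := hvij0 t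
      have hsub : vj t - vi t ≠ 0 := sub_ne_zero.mpr (hne t).symm
      field_simp at ht ⊢
      linear_combination -ht
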